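/- If S_∞ = ∅, then S is guessable: there exists G : ℕ^{<ℕ} → ℕ such that for every f : ℕ → ℕ, G(f↾n) converges to 1 if f ∈ S and to 0 if f ∉ S. -/

import Mathlib

open Ordinal Filter Topology

/-- The first `n` values of `f` as a finite sequence. -/
def seg (f : ℕ → ℕ) (n : ℕ) : List ℕ := (List.range n).map f

/-- `[X]`: the set of infinite sequences all of whose initial segments lie in `X`. -/
def ext (X : Set (List ℕ)) : Set (ℕ → ℕ) := {f | ∀ n, seg f n ∈ X}

/-- `σ` is an initial segment of `f`. -/
def isInit (σ : List ℕ) (f : ℕ → ℕ) : Prop := seg f σ.length = σ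

/-- One step of the derivative process relative to `S`. -/
def derivStep (S : Set (ℕ → ℕ)) (X : Set (List ℕ)) : Set (List ℕ) :=
  {x ∈ X | ∃ f g : ℕ → ℕ, f ∈ ext X ∧ g ∈ ext X ∧ isInit x f ∧ isInit x g ∧ f ∈ S ∧ g ∉ S}

/-- The transfinite sequence `S_α`. -/
noncomputable def dSeq (S : Set (ℕ → ℕ)) (α : Ordinal.{0}) : Set (List ℕ) :=
  Ordinal.limitRecOn α Set.univ (fun _ X => derivStep S X)
    (fun o _ ih => ⋂ (β : Set.Iio o), ih β.1 β.2)

/-- `α(S)`: the least ordinal where the process stabilizes. -/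
noncomputable def kernelOrd (S : Set (ℕ → ℕ)) : Ordinal.{0} :=
  sInf {α | dSeq S α = dSeq S (α + 1)}

/-- `S_∞`, the kernel. -/
noncomputable def kernel (S : Set (ℕ → ℕ)) : Set (List ℕ) := dSeq S (kernelOrd S)

/-- `β(σ)`: the least ordinal `α` with `σ ∉ S_α`. -/
noncomputable def bOrd (S : Set (ℕ → ℕ)) (σ : List ℕ) : Ordinal.{0} :=
  sInf {α | σ ∉ dSeq S α}

open Classical in
/-- `S` is guessable. -/
def Guessable (S : Set (ℕ → ℕ)) : Prop :=
  ∃ G : List ℕ → ℕ, ∀ f : ℕ → ℕ,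
    Tendsto (fun n => G (seg f n)) atTop (𝓝 (if f ∈ S then 1 else 0))

/-- `Δ⁰₂`: both a countable union of closed sets and a countable intersection of open sets. -/
def IsDelta02 (S : Set (ℕ → ℕ)) : Prop :=
  (∃ F : ℕ → Set (ℕ → ℕ), (∀ n, IsClosed (F n)) ∧ S = ⋃ n, F n) ∧
  (∃ U : ℕ → Set (ℕ → ℕ), (∀ n, IsOpen (U n)) ∧ S = ⋂ n, U n)



section Aux

lemma seg_length (f : ℕ → ℕ) (n : ℕ) : (seg f n).length = n := by simp [seg]

lemma isInit_seg_self (f : ℕ → ℕ) (n : ℕ) : isInit (seg f n) f := by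
  simp [isInit, seg_length]

lemma seg_eq_of_seg_eq {f g : ℕ → ℕ} {m n : ℕ} (h : seg g m = seg f m) (hn : n ≤ m) :
    seg g n = seg f n := by
  simp only [seg, List.map_inj_left, List.mem_range] at h ⊢
  exact fun a ha => h a (lt_of_lt_of_le ha hn)

lemma dSeq_zero (S : Set (ℕ → ℕ)) : dSeq S 0 = Set.univ :=
  Ordinal.limitRecOn_zero _ _ _

lemma dSeq_succ (S : Set (ℕ → ℕ)) (α : Ordinal) :
    dSeq S (Order.succ α) = derivStep S (dSeq S α) :=
  Ordinal.limitRecOn_succ _ _ _ _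

lemma dSeq_limit (S : Set (ℕ → ℕ)) {o : Ordinal} (ho : Order.IsSuccLimit o) :
    dSeq S o = ⋂ (β : Set.Iio o), dSeq S β.1 :=
  Ordinal.limitRecOn_limit _ _ _ _ ho

lemma derivStep_subset (S : Set (ℕ → ℕ)) (X : Set (List ℕ)) : derivStep S X ⊆ X :=
  fun _ hx => hx.1

lemma dSeq_anti (S : Set (ℕ → ℕ)) : ∀ β α, α ≤ β → dSeq S β ⊆ dSeq S α := by
  intro β
  induction β using Ordinal.induction with
  | h β ih =>
    intro α hle
    rcases eq_or_lt_of_le hle with rfl | hlt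
    · exact subset_rfl
    rcases Ordinal.zero_or_succ_or_isSuccLimit β with h0 | ⟨γ, rfl⟩ | hlim
    · exact absurd hlt (by simp [h0])
    · have hαγ : α ≤ γ := Order.lt_succ_iff.mp hlt
      rw [dSeq_succ]
      exact (derivStep_subset S _).trans (ih γ (Order.lt_succ γ) α hαγ)
    · rw [dSeq_limit S hlim]
      exact Set.iInter_subset_of_subset ⟨α, hlt⟩ subset_rfl

lemma seg_mem_dSeq_of_le (S : Set (ℕ → ℕ)) :
    ∀ α (f : ℕ → ℕ) (m n : ℕ), n ≤ m → seg f m ∈ dSeq S α → seg f n ∈ dSeq S α := by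
  intro α
  induction α using Ordinal.induction with
  | h α ih =>
    intro f m n hnm hm
    rcases Ordinal.zero_or_succ_or_isSuccLimit α with h0 | ⟨γ, rfl⟩ | hlim
    · simp [h0, dSeq_zero]
    · rw [dSeq_succ] at hm ⊢
      obtain ⟨hX, g, g', hg, hg', hi, hi', hgS, hg'S⟩ := hm
      have hgm : seg g m = seg f m := by
        have := hi; rwa [isInit, seg_length] at this
      have hg'm : seg g' m = seg f m := by
        have := hi'; rwa [isInit, seg_length] at this
      refine ⟨ih γ (Order.lt_succ γ) f m n hnm hX, g, g', hg, hg', ?_, ?_, hgS, hg'S⟩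
      · rw [isInit, seg_length]; exact seg_eq_of_seg_eq hgm hnm
      · rw [isInit, seg_length]; exact seg_eq_of_seg_eq hg'm hnm
    · rw [dSeq_limit S hlim] at hm ⊢
      rw [Set.mem_iInter] at hm ⊢
      exact fun β => ih β.1 β.2 f m n hnm (hm β)

variable {S : Set (ℕ → ℕ)} (hk : kernel S = ∅)

lemma bOrd_set_nonempty (hk : kernel S = ∅) (σ : List ℕ) :
    {α | σ ∉ dSeq S α}.Nonempty :=
  ⟨kernelOrd S, by show σ ∉ kernel S; simp [hk]⟩

lemma not_mem_dSeq_bOrd (hk : kernel S = ∅) (σ : List ℕ) : σ ∉ dSeq S (bOrd S σ) :=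
  csInf_mem (bOrd_set_nonempty hk σ)

lemma mem_dSeq_of_lt_bOrd (hk : kernel S = ∅) {σ : List ℕ} {α : Ordinal}
    (hα : α < bOrd S σ) : σ ∈ dSeq S α := by
  by_contra hmem
  have hle : bOrd S σ ≤ α := csInf_le (OrderBot.bddBelow _) (show α ∈ {α | σ ∉ dSeq S α} from hmem)
  exact absurd hle (not_le.mpr hα)

lemma bOrd_is_succ (hk : kernel S = ∅) (σ : List ℕ) :
    ∃ γ, bOrd S σ = Order.succ γ := by
  rcases Ordinal.zero_or_succ_or_isSuccLimit (bOrd S σ) with h0 | hs | hlim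
  · exfalso
    have := not_mem_dSeq_bOrd hk σ
    rw [h0, dSeq_zero] at this
    exact this (Set.mem_univ _)
  · obtain ⟨γ, hγ⟩ := hs; exact ⟨γ, hγ.symm⟩
  · exfalso
    have hmem := not_mem_dSeq_bOrd hk σ
    rw [dSeq_limit S hlim, Set.mem_iInter] at hmem
    push_neg at hmem
    obtain ⟨⟨β, hβ⟩, hβ2⟩ := hmem
    exact hβ2 (mem_dSeq_of_lt_bOrd hk hβ)

lemma bOrd_anti (hk : kernel S = ∅) (f : ℕ → ℕ) {n m : ℕ} (hnm : n ≤ m) :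
    bOrd S (seg f m) ≤ bOrd S (seg f n) := by
  refine csInf_le_csInf (OrderBot.bddBelow _) (bOrd_set_nonempty hk _) ?_
  intro α hα
  exact fun hmm => hα (seg_mem_dSeq_of_le S α f m n hnm hmm)

end Aux

open Classical in
theorem stmt8 (S : Set (ℕ → ℕ)) (h : kernel S = ∅) :
    ∃ G : List ℕ → ℕ, ∀ f : ℕ → ℕ,
      Filter.Tendsto (fun n => G (seg f n)) Filter.atTop
        (nhds (if f ∈ S then 1 else 0)) := by
  classical
  refine ⟨fun σ => if (∃ h : ℕ → ℕ, h ∈ S ∧ h ∈ ext (dSeq S (Ordinal.pred (bOrd S σ))) ∧ isInit σ h) then 1 else 0, ?_⟩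
  intro f
  -- the sequence of ordinals bOrd S (seg f n) stabilizes
  set A : Set Ordinal := Set.range (fun n => bOrd S (seg f n)) with hA
  have hAne : A.Nonempty := ⟨bOrd S (seg f 0), 0, rfl⟩
  obtain ⟨N, hN⟩ : ∃ N, bOrd S (seg f N) = sInf A := by
    obtain ⟨N, hN⟩ := csInf_mem hAne
    exact ⟨N, hN⟩
  have hstab : ∀ n, N ≤ n → bOrd S (seg f n) = bOrd S (seg f N) := by
    intro n hn
    refine le_antisymm (bOrd_anti h f hn) ?_
    rw [hN]
    exact csInf_le (OrderBot.bddBelow _) ⟨n, rfl⟩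
  obtain ⟨γ, hγ⟩ := bOrd_is_succ h (seg f N)
  -- every initial segment of f lies in dSeq S γ
  have hfmem : ∀ n, seg f n ∈ dSeq S γ := by
    intro n
    rcases le_or_gt n N with hle | hlt
    · refine seg_mem_dSeq_of_le S γ f N n hle ?_
      exact mem_dSeq_of_lt_bOrd h (by rw [hγ]; exact Order.lt_succ γ)
    · exact mem_dSeq_of_lt_bOrd h
        (by rw [hstab n hlt.le, hγ]; exact Order.lt_succ γ)
  have hfe : f ∈ ext (dSeq S γ) := hfmem
  have hpred : ∀ n, N ≤ n → Ordinal.pred (bOrd S (seg f n)) = γ := by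
    intro n hn
    rw [hstab n hn, hγ]
    exact Ordinal.pred_succ γ
  have key : ∀ n, N ≤ n →
      (if (∃ h : ℕ → ℕ, h ∈ S ∧ h ∈ ext (dSeq S (Ordinal.pred (bOrd S (seg f n)))) ∧
        isInit (seg f n) h) then 1 else 0) = (if f ∈ S then 1 else 0) := by
    intro n hn
    rw [hpred n hn]
    by_cases hfS : f ∈ S
    · rw [if_pos hfS, if_pos ⟨f, hfS, hfe, isInit_seg_self f n⟩]
    · rw [if_neg hfS, if_neg ?_]
      rintro ⟨g, hgS, hge, hgi⟩
      -- then seg f n ∈ derivStep S (dSeq S γ) = dSeq S (succ γ), contradiction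
      have : seg f n ∈ dSeq S (Order.succ γ) := by
        rw [dSeq_succ]
        exact ⟨hfmem n, g, f, hge, hfe, hgi, isInit_seg_self f n, hgS, hfS⟩
      have hlt : bOrd S (seg f n) ≤ Order.succ γ := by
        rw [hstab n hn, hγ]
      exact not_mem_dSeq_bOrd h (seg f n)
        (dSeq_anti S _ _ hlt this)
  refine Filter.Tendsto.congr' ?_ tendsto_const_nhds
  filter_upwards [Filter.eventually_ge_atTop N] with n hn
  exact (key n hn).symm
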